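/- If additionally n and r are positive integers, s = r·p, and x = ⌈⌈n/p⌉/s⌉, then the maximum number of keys per output bucket of the deterministic regular oversampling algorithm satisfies n_max ≤ (1 + 1/r)·(n/p) + (r + 1)·p; that is, each of the cardinalities |{(k,q) : K k q < t_s}|, |{(k,q) : t_{j·s} < K k q < t_{(j+1)·s}}| for 1 ≤ j ≤ p−2, and |{(k,q) : K k q > t_{(p−1)·s}}| is at most (1 + 1/r)·(n/p) + (r + 1)·p (as a bound in the rationals). -/

import Mathlib

private lemma idx_lt {a b : ℕ} (ha : 1 ≤ a) (hab : a ≤ b) : a - 1 < b := by omega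

section RSAux

lemma rs_card_filter_prod {β γ : Type*} [Fintype β] [Fintype γ]
    (P : β → γ → Prop) [∀ b c, Decidable (P b c)] :
    (Finset.univ.filter fun bc : β × γ => P bc.1 bc.2).card
      = ∑ b : β, (Finset.univ.filter fun c : γ => P b c).card := by
  simp only [Finset.card_filter]
  rw [← Finset.univ_product_univ, Finset.sum_product]
lemma rs_card_val_lt_le (m c : ℕ) :
    (Finset.univ.filter fun j : Fin m => (j : ℕ) < c).card ≤ c := by
  have h := Finset.card_le_card_of_injOn (s := Finset.univ.filter fun j : Fin m => (j : ℕ) < c) (t := Finset.range c) (fun j : Fin m => (j : ℕ))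
    (by
      intro a ha
      simpa using ha)
    (fun a _ b _ h => Fin.val_injective h)
  simpa using h

lemma rs_card_val_lt (m c : ℕ) (hc : c ≤ m) :
    (Finset.univ.filter fun j : Fin m => (j : ℕ) < c).card = c := by
  rw [← Finset.card_range c]
  apply Finset.card_bij (fun (j : Fin m) _ => (j : ℕ))
  · intro a ha
    simp only [Finset.mem_filter] at ha
    simpa using ha.2
  · intro a _ b _ h; exact Fin.val_injective h
  · intro b hb
    simp only [Finset.mem_range] at hb
    exact ⟨⟨b, lt_of_lt_of_le hb hc⟩, by simp [hb], rfl⟩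

lemma rs_card_val_ge (m c : ℕ) (hc : c ≤ m) :
    (Finset.univ.filter fun j : Fin m => c ≤ (j : ℕ)).card = m - c := by
  have h := Finset.card_filter_add_card_filter_not
    (s := (Finset.univ : Finset (Fin m))) (p := fun j : Fin m => (j : ℕ) < c)
  simp only [not_lt, Finset.card_univ, Fintype.card_fin] at h
  have h2 := rs_card_val_lt m c hc
  omega
lemma rs_below {p s x : ℕ} (hx : 0 < x) {α : Type*} [LinearOrder α]
    (K : Fin p → Fin (s * x) → α) (hK : ∀ k, Monotone (K k))
    (e : Fin p × Fin s → Fin (s * x))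
    (he : ∀ kj, (e kj : ℕ) = ((kj.2 : ℕ) + 1) * x - 1) (t₀ : α) :
    (Finset.univ.filter fun kq : Fin p × Fin (s * x) => K kq.1 kq.2 < t₀).card ≤
      x * ((Finset.univ.filter fun kj : Fin p × Fin s => K kj.1 (e kj) < t₀).card + p) := by
  rw [rs_card_filter_prod (fun k q => K k q < t₀),
      rs_card_filter_prod (fun k j => K k (e (k, j)) < t₀)]
  have hk : ∀ k : Fin p,
      (Finset.univ.filter fun q : Fin (s * x) => K k q < t₀).card ≤
        x * ((Finset.univ.filter fun j : Fin s => K k (e (k, j)) < t₀).card + 1) := by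
    intro k
    set c := (Finset.univ.filter fun j : Fin s => K k (e (k, j)) < t₀).card with hc
    have hsub : (Finset.univ.filter fun q : Fin (s * x) => K k q < t₀) ⊆
        (Finset.univ.filter fun q : Fin (s * x) => (q : ℕ) < x * (c + 1)) := by
      intro q hq
      simp only [Finset.mem_filter, Finset.mem_univ, true_and] at hq ⊢
      have hj0 : (q : ℕ) / x < s := by
        rw [Nat.div_lt_iff_lt_mul hx]; exact q.isLt
      have hsubj : (Finset.univ.filter fun j : Fin s => (j : ℕ) < (q : ℕ) / x) ⊆
          (Finset.univ.filter fun j : Fin s => K k (e (k, j)) < t₀) := by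
        intro j hj
        simp only [Finset.mem_filter, Finset.mem_univ, true_and] at hj ⊢
        have hle : (e (k, j) : ℕ) ≤ (q : ℕ) := by
          have he' : (e (k, j) : ℕ) = ((j : ℕ) + 1) * x - 1 := he (k, j)
          rw [he']
          have h1 : ((j : ℕ) + 1) * x ≤ ((q : ℕ) / x) * x :=
            Nat.mul_le_mul_right x (by omega)
          have h2 : (q : ℕ) / x * x ≤ (q : ℕ) := Nat.div_mul_le_self _ _
          omega
        exact lt_of_le_of_lt (hK k (show e (k, j) ≤ q from hle)) hq
      have hcard := Finset.card_le_card hsubj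
      rw [rs_card_val_lt s ((q : ℕ) / x) (le_of_lt hj0)] at hcard
      have hq2 : (q : ℕ) < ((q : ℕ) / x + 1) * x := by
        rw [Nat.add_mul, one_mul]
        have h5 := Nat.div_add_mod' (q : ℕ) x
        have h6 := Nat.mod_lt (q : ℕ) hx
        omega
      have hq3 : ((q : ℕ) / x + 1) * x ≤ (c + 1) * x := Nat.mul_le_mul_right x (by omega)
      calc (q : ℕ) < ((q : ℕ) / x + 1) * x := hq2
        _ ≤ (c + 1) * x := hq3
        _ = x * (c + 1) := Nat.mul_comm _ _
    calc (Finset.univ.filter fun q : Fin (s * x) => K k q < t₀).card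
        ≤ (Finset.univ.filter fun q : Fin (s * x) => (q : ℕ) < x * (c + 1)).card :=
          Finset.card_le_card hsub
      _ ≤ x * (c + 1) := rs_card_val_lt_le _ _
  calc ∑ k : Fin p, (Finset.univ.filter fun q : Fin (s * x) => K k q < t₀).card
      ≤ ∑ k : Fin p,
          x * ((Finset.univ.filter fun j : Fin s => K k (e (k, j)) < t₀).card + 1) :=
        Finset.sum_le_sum fun k _ => hk k
    _ = x * ((∑ k : Fin p,
          (Finset.univ.filter fun j : Fin s => K k (e (k, j)) < t₀).card) + p) := by
        rw [← Finset.mul_sum, Finset.sum_add_distrib, Finset.sum_const, Finset.card_univ,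
          Fintype.card_fin, smul_eq_mul, mul_one]

lemma rs_above {p s x : ℕ} (hx : 0 < x) {α : Type*} [LinearOrder α]
    (K : Fin p → Fin (s * x) → α) (hK : ∀ k, Monotone (K k))
    (e : Fin p × Fin s → Fin (s * x))
    (he : ∀ kj, (e kj : ℕ) = ((kj.2 : ℕ) + 1) * x - 1) (t₀ : α) :
    (Finset.univ.filter fun kq : Fin p × Fin (s * x) => t₀ < K kq.1 kq.2).card ≤
      x * (Finset.univ.filter fun kj : Fin p × Fin s => t₀ < K kj.1 (e kj)).card := by
  rw [rs_card_filter_prod (fun k q => t₀ < K k q),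
      rs_card_filter_prod (fun k j => t₀ < K k (e (k, j)))]
  have hk : ∀ k : Fin p,
      (Finset.univ.filter fun q : Fin (s * x) => t₀ < K k q).card ≤
        x * (Finset.univ.filter fun j : Fin s => t₀ < K k (e (k, j))).card := by
    intro k
    set c := (Finset.univ.filter fun j : Fin s => t₀ < K k (e (k, j))).card with hc
    have hcs : c ≤ s := by
      calc c ≤ (Finset.univ : Finset (Fin s)).card := Finset.card_filter_le _ _
        _ = s := by simp
    have hsub : (Finset.univ.filter fun q : Fin (s * x) => t₀ < K k q) ⊆
        (Finset.univ.filter fun q : Fin (s * x) => x * (s - c) ≤ (q : ℕ)) := by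
      intro q hq
      simp only [Finset.mem_filter, Finset.mem_univ, true_and] at hq ⊢
      have hj0 : (q : ℕ) / x < s := by
        rw [Nat.div_lt_iff_lt_mul hx]; exact q.isLt
      have hsubj : (Finset.univ.filter fun j : Fin s => (q : ℕ) / x ≤ (j : ℕ)) ⊆
          (Finset.univ.filter fun j : Fin s => t₀ < K k (e (k, j))) := by
        intro j hj
        simp only [Finset.mem_filter, Finset.mem_univ, true_and] at hj ⊢
        have hle : (q : ℕ) ≤ (e (k, j) : ℕ) := by
          have he' : (e (k, j) : ℕ) = ((j : ℕ) + 1) * x - 1 := he (k, j)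
          rw [he']
          have h1 : ((q : ℕ) / x + 1) * x ≤ ((j : ℕ) + 1) * x :=
            Nat.mul_le_mul_right x (by omega)
          have h2 : (q : ℕ) < ((q : ℕ) / x + 1) * x := by
            rw [Nat.add_mul, one_mul]
            have h5 := Nat.div_add_mod' (q : ℕ) x
            have h6 := Nat.mod_lt (q : ℕ) hx
            omega
          omega
        exact lt_of_lt_of_le hq (hK k (show q ≤ e (k, j) from hle))
      have hcard := Finset.card_le_card hsubj
      rw [rs_card_val_ge s ((q : ℕ) / x) (le_of_lt hj0)] at hcard
      have h3 : (s - c) ≤ (q : ℕ) / x := by omega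
      calc x * (s - c) ≤ x * ((q : ℕ) / x) := Nat.mul_le_mul_left x h3
        _ = (q : ℕ) / x * x := Nat.mul_comm _ _
        _ ≤ (q : ℕ) := Nat.div_mul_le_self _ _
    have hle2 : x * (s - c) ≤ s * x := by
      calc x * (s - c) ≤ x * s := Nat.mul_le_mul_left x (Nat.sub_le _ _)
        _ = s * x := Nat.mul_comm _ _
    calc (Finset.univ.filter fun q : Fin (s * x) => t₀ < K k q).card
        ≤ (Finset.univ.filter fun q : Fin (s * x) => x * (s - c) ≤ (q : ℕ)).card :=
          Finset.card_le_card hsub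
      _ = s * x - x * (s - c) := rs_card_val_ge _ _ hle2
      _ ≤ x * c := by
          have : x * (s - c) + x * c = x * s := by
            rw [← Nat.mul_add, Nat.sub_add_cancel hcs]
          have hsx : s * x = x * s := Nat.mul_comm _ _
          omega
  calc ∑ k : Fin p, (Finset.univ.filter fun q : Fin (s * x) => t₀ < K k q).card
      ≤ ∑ k : Fin p,
          x * (Finset.univ.filter fun j : Fin s => t₀ < K k (e (k, j))).card :=
        Finset.sum_le_sum fun k _ => hk k
    _ = x * (∑ k : Fin p,
          (Finset.univ.filter fun j : Fin s => t₀ < K k (e (k, j))).card) := by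
        rw [← Finset.mul_sum]
lemma rs_count {p s : ℕ} {α : Type*} [LinearOrder α]
    (f : Fin p × Fin s → α) (t : Fin (p * s) → α)
    (hsample : (↑(List.ofFn t) : Multiset α) = Multiset.map f Finset.univ.val)
    (P : α → Prop) [DecidablePred P] :
    (Finset.univ.filter fun kj : Fin p × Fin s => P (f kj)).card
      = (Finset.univ.filter fun i : Fin (p * s) => P (t i)).card := by
  have h1 : (Finset.univ.filter fun kj : Fin p × Fin s => P (f kj)).card
      = Multiset.countP P (Multiset.map f Finset.univ.val) := by
    rw [Multiset.countP_map]
    rfl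
  have h2 : (Finset.univ.filter fun i : Fin (p * s) => P (t i)).card
      = Multiset.countP P (Multiset.map t Finset.univ.val) := by
    rw [Multiset.countP_map]
    rfl
  have h3 : (↑(List.ofFn t) : Multiset α) = Multiset.map t Finset.univ.val := by
    rw [List.ofFn_eq_map]
    rfl
  rw [h1, h2, ← h3, hsample]

lemma rs_t_lt {N : ℕ} {α : Type*} [LinearOrder α] (t : Fin N → α) (ht : Monotone t)
    (i₀ : Fin N) :
    (Finset.univ.filter fun i : Fin N => t i < t i₀).card ≤ (i₀ : ℕ) := by
  refine le_trans (Finset.card_le_card ?_) (rs_card_val_lt_le N (i₀ : ℕ))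
  intro i hi
  simp only [Finset.mem_filter, Finset.mem_univ, true_and] at hi ⊢
  by_contra hcon
  exact absurd (ht (show i₀ ≤ i by omega)) (not_le.mpr hi)

lemma rs_t_gt {N : ℕ} {α : Type*} [LinearOrder α] (t : Fin N → α) (ht : Monotone t)
    (i₀ : Fin N) :
    (Finset.univ.filter fun i : Fin N => t i₀ < t i).card ≤ N - 1 - (i₀ : ℕ) := by
  have hsub : (Finset.univ.filter fun i : Fin N => t i₀ < t i) ⊆
      (Finset.univ.filter fun i : Fin N => (i₀ : ℕ) + 1 ≤ (i : ℕ)) := by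
    intro i hi
    simp only [Finset.mem_filter, Finset.mem_univ, true_and] at hi ⊢
    by_contra hcon
    exact absurd (ht (show i ≤ i₀ by omega)) (not_le.mpr hi)
  have h := Finset.card_le_card hsub
  rw [rs_card_val_ge N ((i₀ : ℕ) + 1) i₀.isLt] at h
  omega

lemma rs_arith (p s x n r : ℕ) (hp : 2 ≤ p) (hr : 0 < r) (hn : 0 < n) (hs : 0 < s)
    (hsr : s = r * p)
    (hxdef : (x : ℤ) = ⌈((⌈(n : ℚ) / (p : ℚ)⌉ : ℤ) : ℚ) / (s : ℚ)⌉) :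
    ((x * (s + p - 1) : ℕ) : ℚ) ≤
      (1 + 1 / (r : ℚ)) * ((n : ℚ) / (p : ℚ)) + ((r : ℚ) + 1) * (p : ℚ) := by
  have hp0 : (0 : ℚ) < p := by exact_mod_cast (show 0 < p by omega)
  have hp2 : (2 : ℚ) ≤ p := by exact_mod_cast hp
  have hr0 : (1 : ℚ) ≤ r := by exact_mod_cast hr
  have hn0 : (1 : ℚ) ≤ n := by exact_mod_cast hn
  have hs0 : (0 : ℚ) < s := by exact_mod_cast hs
  set A : ℤ := ⌈(n : ℚ) / (p : ℚ)⌉ with hA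
  have hx1 : (x : ℚ) < (A : ℚ) / (s : ℚ) + 1 := by
    have h := Int.ceil_lt_add_one (((A : ℤ) : ℚ) / (s : ℚ))
    rw [← hxdef] at h
    exact_mod_cast h
  have h1 : (x : ℤ) * s ≤ A + s - 1 := by
    have hq : (x : ℚ) * s < (A : ℚ) + s := by
      calc (x : ℚ) * s < ((A : ℚ) / s + 1) * s := mul_lt_mul_of_pos_right hx1 hs0
        _ = (A : ℚ) + s := by field_simp
    have hz : (x : ℤ) * s < A + s := by exact_mod_cast hq
    omega
  have hA1 : (A : ℚ) < (n : ℚ) / p + 1 := Int.ceil_lt_add_one _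
  have h2 : A * p ≤ n + p - 1 := by
    have hq : (A : ℚ) * p < (n : ℚ) + p := by
      calc (A : ℚ) * p < ((n : ℚ) / p + 1) * p := mul_lt_mul_of_pos_right hA1 hp0
        _ = (n : ℚ) + p := by field_simp
    have hz : A * (p : ℤ) < (n : ℤ) + p := by exact_mod_cast hq
    omega
  have h3 : (x : ℤ) * s * p ≤ n + s * p - 1 := by
    nlinarith [mul_le_mul_of_nonneg_right h1 (show (0 : ℤ) ≤ p by positivity), h2]
  have h3q : (x : ℚ) * s * p ≤ (n : ℚ) + s * p - 1 := by exact_mod_cast h3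
  have hcast : ((x * (s + p - 1) : ℕ) : ℚ) = (x : ℚ) * ((s : ℚ) + p - 1) := by
    rw [Nat.cast_mul, Nat.cast_sub (by omega : 1 ≤ s + p), Nat.cast_add, Nat.cast_one]
  rw [hcast]
  have hsq : (s : ℚ) = r * p := by exact_mod_cast hsr
  have key : (1 + 1 / (r : ℚ)) * ((n : ℚ) / p) + ((r : ℚ) + 1) * p
      = (((r : ℚ) + 1) * n + ((r : ℚ) + 1) * p * (r * p)) / (r * p) := by
    field_simp
    try ring
  rw [key, le_div_iff₀ (by positivity)]
  rw [hsq] at h3q ⊢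
  have hnn : (0 : ℚ) ≤ (r : ℚ) * p + p - 1 := by nlinarith
  have hm := mul_le_mul_of_nonneg_right h3q hnn
  nlinarith [hm, hp0, hp2, hr0, hn0, mul_pos hp0 hp0, sq_nonneg ((r:ℚ)*p)]

end RSAux
/-- **Statement 3.** In the regular oversampling setup with `p ≥ 2`, `s = r * p`
and segment length `x = ⌈⌈n/p⌉/s⌉`, each of the `p` buckets induced by the
`p - 1` splitters contains at most `(1 + 1/r) * (n/p) + (r + 1) * p` keys. -/
theorem stmt_4
    (p s x n r : ℕ) (hp : 2 ≤ p) (hs : 0 < s) (hx : 0 < x)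
    (hn : 0 < n) (hr : 0 < r)
    (hsr : s = r * p)
    (hxdef : (x : ℤ) = ⌈((⌈(n : ℚ) / (p : ℚ)⌉ : ℤ) : ℚ) / (s : ℚ)⌉)
    (α : Type*) [LinearOrder α]
    (K : Fin p → Fin (s * x) → α)
    (hK : ∀ k : Fin p, Monotone (K k))
    (t : Fin (p * s) → α)
    (ht : Monotone t)
    (hsample :
      (↑(List.ofFn t) : Multiset α) =
        Multiset.map
          (fun kj : Fin p × Fin s =>
            K kj.1
              ⟨((kj.2 : ℕ) + 1) * x - 1,
                idx_lt (Nat.mul_pos (Nat.succ_pos _) hx)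
                  (Nat.mul_le_mul kj.2.isLt (le_refl x))⟩)
          Finset.univ.val) :
    ((Finset.univ.filter
        (fun kq : Fin p × Fin (s * x) =>
          K kq.1 kq.2 <
            t ⟨s - 1,
              idx_lt hs (le_mul_of_one_le_left (Nat.zero_le s) (by omega))⟩)).card : ℚ) ≤
        (1 + 1 / (r : ℚ)) * ((n : ℚ) / (p : ℚ)) + ((r : ℚ) + 1) * (p : ℚ) ∧
    (∀ j : ℕ, ∀ (hj1 : 1 ≤ j) (hj2 : j ≤ p - 2),
      ((Finset.univ.filter
          (fun kq : Fin p × Fin (s * x) =>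
            t ⟨j * s - 1,
                idx_lt (Nat.mul_pos hj1 hs)
                  (Nat.mul_le_mul (by omega) (le_refl s))⟩ <
              K kq.1 kq.2 ∧
            K kq.1 kq.2 <
              t ⟨(j + 1) * s - 1,
                idx_lt (Nat.mul_pos (Nat.succ_pos j) hs)
                  (Nat.mul_le_mul (by omega) (le_refl s))⟩)).card : ℚ) ≤
        (1 + 1 / (r : ℚ)) * ((n : ℚ) / (p : ℚ)) + ((r : ℚ) + 1) * (p : ℚ)) ∧
    ((Finset.univ.filter
        (fun kq : Fin p × Fin (s * x) =>
          t ⟨(p - 1) * s - 1,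
              idx_lt (Nat.mul_pos (by omega) hs)
                (Nat.mul_le_mul (Nat.sub_le p 1) (le_refl s))⟩ <
            K kq.1 kq.2)).card : ℚ) ≤
      (1 + 1 / (r : ℚ)) * ((n : ℚ) / (p : ℚ)) + ((r : ℚ) + 1) * (p : ℚ) := by
  -- index function for segment ends
  set F : Fin p × Fin s → Fin (s * x) := fun kj =>
    ⟨((kj.2 : ℕ) + 1) * x - 1,
      idx_lt (Nat.mul_pos (Nat.succ_pos _) hx)
        (Nat.mul_le_mul kj.2.isLt (le_refl x))⟩ with hF
  have he : ∀ kj : Fin p × Fin s, (F kj : ℕ) = ((kj.2 : ℕ) + 1) * x - 1 := fun kj => rfl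
  have hbelow : ∀ i₀ : Fin (p * s),
      (Finset.univ.filter fun kq : Fin p × Fin (s * x) => K kq.1 kq.2 < t i₀).card ≤
        x * ((i₀ : ℕ) + p) := by
    intro i₀
    refine le_trans (rs_below hx K hK F he (t i₀)) ?_
    have hc : (Finset.univ.filter fun kj : Fin p × Fin s => K kj.1 (F kj) < t i₀).card
        = (Finset.univ.filter fun i : Fin (p * s) => t i < t i₀).card :=
      rs_count (fun kj => K kj.1 (F kj)) t hsample (fun a => a < t i₀)
    refine Nat.mul_le_mul_left x (Nat.add_le_add_right ?_ p)
    exact le_trans (le_of_eq hc) (rs_t_lt t ht i₀)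
  have habove : ∀ i₀ : Fin (p * s),
      (Finset.univ.filter fun kq : Fin p × Fin (s * x) => t i₀ < K kq.1 kq.2).card ≤
        x * (p * s - 1 - (i₀ : ℕ)) := by
    intro i₀
    refine le_trans (rs_above hx K hK F he (t i₀)) ?_
    have hc : (Finset.univ.filter fun kj : Fin p × Fin s => t i₀ < K kj.1 (F kj)).card
        = (Finset.univ.filter fun i : Fin (p * s) => t i₀ < t i).card :=
      rs_count (fun kj => K kj.1 (F kj)) t hsample (fun a => t i₀ < a)
    refine Nat.mul_le_mul_left x ?_
    exact le_trans (le_of_eq hc) (rs_t_gt t ht i₀)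
  have harith := rs_arith p s x n r hp hr hn hs hsr hxdef
  have hRHSnn : (0 : ℚ) ≤ (1 + 1 / (r : ℚ)) * ((n : ℚ) / (p : ℚ)) + ((r : ℚ) + 1) * (p : ℚ) :=
    le_trans (by positivity) harith
  refine ⟨?_, ?_, ?_⟩
  · -- first bucket
    have h1 := hbelow ⟨s - 1,
      idx_lt hs (le_mul_of_one_le_left (Nat.zero_le s) (by omega))⟩
    have h2 : x * ((s - 1 : ℕ) + p) = x * (s + p - 1) := by congr 1; omega
    rw [h2] at h1
    calc ((Finset.univ.filter _).card : ℚ)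
        ≤ ((x * (s + p - 1) : ℕ) : ℚ) := by exact_mod_cast h1
      _ ≤ _ := harith
  · -- middle buckets
    intro j hj1 hj2
    set a := t ⟨j * s - 1,
      idx_lt (Nat.mul_pos hj1 hs) (Nat.mul_le_mul (by omega) (le_refl s))⟩ with ha
    set b := t ⟨(j + 1) * s - 1,
      idx_lt (Nat.mul_pos (Nat.succ_pos j) hs)
        (Nat.mul_le_mul (by omega) (le_refl s))⟩ with hb
    have hjs : j * s + s = (j + 1) * s := by rw [Nat.add_mul, one_mul]
    have hjsps : (j + 1) * s ≤ p * s := Nat.mul_le_mul_right s (by omega)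
    have hab : a ≤ b := by
      apply ht
      simp only [Fin.mk_le_mk]
      omega
    rcases eq_or_lt_of_le hab with heq | hlt
    · have hempty : (Finset.univ.filter fun kq : Fin p × Fin (s * x) =>
          a < K kq.1 kq.2 ∧ K kq.1 kq.2 < b) = ∅ := by
        apply Finset.filter_eq_empty_iff.mpr
        intro kq _
        rw [← heq]
        intro hcon
        exact absurd (lt_trans hcon.1 hcon.2) (lt_irrefl a)
      rw [hempty]
      simpa using hRHSnn
    · -- main middle case
      set S1 := Finset.univ.filter fun kq : Fin p × Fin (s * x) =>
        a < K kq.1 kq.2 ∧ K kq.1 kq.2 < b with hS1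
      set S2 := Finset.univ.filter fun kq : Fin p × Fin (s * x) =>
        ¬ K kq.1 kq.2 < b with hS2
      have hdisj : Disjoint S1 S2 := by
        rw [Finset.disjoint_left]
        intro kq h1 h2
        simp only [hS1, hS2, Finset.mem_filter, Finset.mem_univ, true_and] at h1 h2
        exact h2 h1.2
      have hsub : S1 ∪ S2 ⊆
          Finset.univ.filter fun kq : Fin p × Fin (s * x) => a < K kq.1 kq.2 := by
        intro kq hkq
        rcases Finset.mem_union.mp hkq with h | h <;>
          simp only [hS1, hS2, Finset.mem_filter, Finset.mem_univ, true_and] at h ⊢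
        · exact h.1
        · exact lt_of_lt_of_le hlt (not_lt.mp h)
      have hcard1 : S1.card + S2.card ≤ x * (p * s - 1 - (j * s - 1)) := by
        rw [← Finset.card_union_of_disjoint hdisj]
        exact le_trans (Finset.card_le_card hsub) (habove _)
      have hcard2 : (Finset.univ.filter fun kq : Fin p × Fin (s * x) =>
          K kq.1 kq.2 < b).card ≤ x * (((j + 1) * s - 1 : ℕ) + p) := hbelow _
      have htotal : (Finset.univ.filter fun kq : Fin p × Fin (s * x) =>
            K kq.1 kq.2 < b).card + S2.card = p * (s * x) := by
        rw [hS2]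
        rw [Finset.card_filter_add_card_filter_not]
        simp [Finset.card_univ]
      have hE1 : x * (p * s - 1 - (j * s - 1)) + x * (j * s) = x * (p * s) := by
        rw [← Nat.mul_add]
        congr 1
        have h1 : 1 ≤ j * s := Nat.mul_pos hj1 hs
        omega
      have hE2 : x * (((j + 1) * s - 1 : ℕ) + p) = x * (j * s) + x * (s + p - 1) := by
        rw [← Nat.mul_add]
        congr 1
        omega
      have hE3 : x * (p * s) = p * (s * x) := by ring
      have hmain : S1.card ≤ x * (s + p - 1) := by omega
      calc ((S1.card : ℚ))
          ≤ ((x * (s + p - 1) : ℕ) : ℚ) := by exact_mod_cast hmain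
        _ ≤ _ := harith
  · -- last bucket
    have h1 := habove ⟨(p - 1) * s - 1,
      idx_lt (Nat.mul_pos (by omega) hs)
        (Nat.mul_le_mul (Nat.sub_le p 1) (le_refl s))⟩
    have hps : (p - 1) * s + s = p * s := by
      rw [← Nat.succ_mul]
      congr 1
      omega
    have h2 : x * (p * s - 1 - ((p - 1) * s - 1)) ≤ x * (s + p - 1) := by
      apply Nat.mul_le_mul_left
      have h3 : 1 ≤ (p - 1) * s := Nat.mul_pos (by omega) hs
      omega
    have h4 := le_trans h1 h2
    calc ((Finset.univ.filter _).card : ℚ)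
        ≤ ((x * (s + p - 1) : ℕ) : ℚ) := by exact_mod_cast h4
      _ ≤ _ := harith
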